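/- Let s and b be positive integers, and let R : ℕ → ℚ be defined by R(0) = s, R(1) = b, R(n+1) = (2b/s)·R(n) − R(n−1). Then R(n) is an integer for every non-negative integer n if and only if s divides 2b. -/

import Mathlib

theorem stmt_12 (s b : ℤ) (hs : 0 < s) (hb : 0 < b)
    (R : ℕ → ℚ) (hR0 : R 0 = (s : ℚ)) (hR1 : R 1 = (b : ℚ))
    (hRrec : ∀ n : ℕ, R (n + 2) = (2 * (b : ℚ) / (s : ℚ)) * R (n + 1) - R n) :
    (∀ n : ℕ, ∃ z : ℤ, R n = (z : ℚ)) ↔ s ∣ 2 * b := by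
  have hsQ : (s : ℚ) ≠ 0 := by exact_mod_cast hs.ne'
  set t : ℚ := 2 * (b : ℚ) / (s : ℚ) with ht
  constructor
  · intro h
    -- key: t^n * R k is an integer for all n, k
    have key : ∀ n k : ℕ, ∃ z : ℤ, t ^ n * R k = (z : ℚ) := by
      intro n
      induction n with
      | zero => intro k; obtain ⟨z, hz⟩ := h k; exact ⟨z, by simp [hz]⟩
      | succ n ih =>
        intro k
        match k with
        | 0 =>
          obtain ⟨z, hz⟩ := ih 1
          refine ⟨2 * z, ?_⟩
          have h0 : t * R 0 = 2 * R 1 := by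
            rw [hR0, hR1, ht]; field_simp
          calc t ^ (n+1) * R 0 = t ^ n * (t * R 0) := by ring
            _ = t ^ n * (2 * R 1) := by rw [h0]
            _ = 2 * (t ^ n * R 1) := by ring
            _ = ((2 * z : ℤ) : ℚ) := by rw [hz]; push_cast; ring
        | k + 1 =>
          obtain ⟨z1, hz1⟩ := ih (k + 2)
          obtain ⟨z2, hz2⟩ := ih k
          refine ⟨z1 + z2, ?_⟩
          have h1 : t * R (k + 1) = R (k + 2) + R k := by
            rw [hRrec k]; ring
          calc t ^ (n+1) * R (k+1) = t ^ n * (t * R (k+1)) := by ring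
            _ = t ^ n * R (k+2) + t ^ n * R k := by rw [h1]; ring
            _ = ((z1 + z2 : ℤ) : ℚ) := by rw [hz1, hz2]; push_cast; ring
    -- hence s^n ∣ b * (2*b)^n for all n
    have hdvd : ∀ n : ℕ, s ^ n ∣ b * (2 * b) ^ n := by
      intro n
      obtain ⟨z, hz⟩ := key n 1
      refine ⟨z, ?_⟩
      have : (b : ℚ) * (2 * b) ^ n = (s : ℚ) ^ n * z := by
        rw [← hz, hR1, ht]
        field_simp
        rw [← mul_pow, mul_div_assoc', mul_comm (s : ℚ), mul_div_assoc, div_self hsQ, mul_one]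
      exact_mod_cast this
    -- transfer to ℕ
    set S := s.natAbs with hS
    set B := b.natAbs with hB
    have hSpos : 0 < S := Int.natAbs_pos.mpr hs.ne'
    have hBpos : 0 < B := Int.natAbs_pos.mpr hb.ne'
    have hdvdN : ∀ n : ℕ, S ^ n ∣ B * (2 * B) ^ n := by
      intro n
      have := Int.natAbs_dvd_natAbs.mpr (hdvd n)
      simpa [Int.natAbs_mul, Int.natAbs_pow, hS, hB] using this
    -- gcd argument
    set g := Nat.gcd S (2 * B) with hg
    have hgpos : 0 < g := Nat.gcd_pos_of_pos_left _ hSpos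
    set q := S / g with hq
    set p := (2 * B) / g with hp
    have hScop : q.Coprime p := Nat.coprime_div_gcd_div_gcd hgpos
    have hSe : S = g * q := (Nat.mul_div_cancel' (Nat.gcd_dvd_left S (2 * B))).symm
    have hTe : 2 * B = g * p := by
      rw [hp, Nat.mul_div_cancel' (Nat.gcd_dvd_right _ _)]
    have hq1 : q = 1 := by
      by_contra hq1
      have hq0 : q ≠ 0 := by
        intro h0
        rw [h0, mul_zero] at hSe
        omega
      have hq2 : 2 ≤ q := (Nat.two_le_iff q).mpr ⟨hq0, hq1⟩
      -- q^n ∣ B for all n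
      have hqB : ∀ n : ℕ, q ^ n ∣ B := by
        intro n
        have h1 : (g * q) ^ n ∣ B * (g * p) ^ n := by
          rw [← hSe, ← hTe]; exact hdvdN n
        have h2 : q ^ n ∣ B * p ^ n := by
          have h3 : g ^ n * q ^ n ∣ g ^ n * (B * p ^ n) := by
            calc g ^ n * q ^ n = (g * q) ^ n := by ring
              _ ∣ B * (g * p) ^ n := h1
              _ = g ^ n * (B * p ^ n) := by ring
          exact (mul_dvd_mul_iff_left (pow_ne_zero n hgpos.ne')).mp h3
        exact (Nat.Coprime.pow n n hScop).dvd_of_dvd_mul_right h2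
      have h4 : q ^ B ≤ B := Nat.le_of_dvd hBpos (hqB B)
      have h5 : B < 2 ^ B := Nat.lt_two_pow_self (n := B)
      have h6 : 2 ^ B ≤ q ^ B := Nat.pow_le_pow_left hq2 B
      omega
    have hSg : S ∣ 2 * B := by rw [hSe, hq1, mul_one]; exact Nat.gcd_dvd_right _ _
    have : (S : ℤ) ∣ (2 * B : ℕ) := Int.natCast_dvd_natCast.mpr hSg
    have hs' : (S : ℤ) = s := Int.natAbs_of_nonneg hs.le
    have hb' : (B : ℤ) = b := Int.natAbs_of_nonneg hb.le
    rw [hs'] at this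
    push_cast [hb'] at this
    exact this
  · rintro ⟨m, hm⟩
    have htm : t = (m : ℚ) := by
      rw [ht]
      have : (2 : ℚ) * b = s * m := by exact_mod_cast hm
      rw [this]
      field_simp
    have main : ∀ n : ℕ, (∃ z : ℤ, R n = (z : ℚ)) ∧ (∃ z : ℤ, R (n + 1) = (z : ℚ)) := by
      intro n
      induction n with
      | zero => exact ⟨⟨s, hR0⟩, ⟨b, hR1⟩⟩
      | succ n ih =>
        obtain ⟨⟨z1, h1⟩, ⟨z2, h2⟩⟩ := ih
        refine ⟨⟨z2, h2⟩, ⟨m * z2 - z1, ?_⟩⟩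
        rw [hRrec n, htm, h1, h2]
        push_cast
        ring
    exact fun n => (main n).1
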